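/- For any vector of 1-forms τ = (τ₁,...,τ₆) and 1-form μ, the matrix-valued 2-forms satisfy [τ]₂ ∧ [μ]₁ - [μ]₁ ∧ [τ]₂ = 0 and [τ]₂ ∧ [μ]₁ + [[μ]₁ ∧ τ]₂ = 0, where [μ]₁ has entries κ_{ij} μ and [τ]₂ has entries ε_{ijp} τ_p. -/

import Mathlib

noncomputable section

/-- The coefficient array `κ_{ij}` of `κ₀ = e^{12}+e^{34}+e^{56}` (0-based indices). -/
def kap : Fin 6 → Fin 6 → ℝ := fun i j =>
  if (i = 0 ∧ j = 1) ∨ (i = 2 ∧ j = 3) ∨ (i = 4 ∧ j = 5) then 1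
  else if (i = 1 ∧ j = 0) ∨ (i = 3 ∧ j = 2) ∨ (i = 5 ∧ j = 4) then -1 else 0

/-- Values of `ε` on the strictly increasing triples (0-based):
`Ω₀ = e^{135}-e^{146}-e^{245}-e^{236}`. -/
def epsBase : Fin 6 → Fin 6 → Fin 6 → ℝ := fun i j k =>
  if i = 0 ∧ j = 2 ∧ k = 4 then 1
  else if i = 0 ∧ j = 3 ∧ k = 5 then -1
  else if i = 1 ∧ j = 3 ∧ k = 4 then -1
  else if i = 1 ∧ j = 2 ∧ k = 5 then -1 else 0

/-- Values of `ε̄` on the strictly increasing triples (0-based):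
`J₀Ω₀ = -e^{246}+e^{235}+e^{145}+e^{136}`. -/
def epsbarBase : Fin 6 → Fin 6 → Fin 6 → ℝ := fun i j k =>
  if i = 1 ∧ j = 3 ∧ k = 5 then -1
  else if i = 1 ∧ j = 2 ∧ k = 4 then 1
  else if i = 0 ∧ j = 3 ∧ k = 4 then 1
  else if i = 0 ∧ j = 2 ∧ k = 5 then 1 else 0

/-- Totally antisymmetric extension of a coefficient array supported on
strictly increasing triples. -/
def antisym3 (b : Fin 6 → Fin 6 → Fin 6 → ℝ) : Fin 6 → Fin 6 → Fin 6 → ℝ := fun i j k =>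
  ∑ σ : Equiv.Perm (Fin 3),
    ((Equiv.Perm.sign σ : ℤ) : ℝ) * b (![i, j, k] (σ 0)) (![i, j, k] (σ 1)) (![i, j, k] (σ 2))

/-- The totally antisymmetric array `ε_{ijk}` with `Ω₀ = (1/6) ε_{ijk} e^{ijk}`. -/
def eps : Fin 6 → Fin 6 → Fin 6 → ℝ := antisym3 epsBase

/-- The totally antisymmetric array `ε̄_{ijk}` with `J₀Ω₀ = (1/6) ε̄_{ijk} e^{ijk}`. -/
def epsbar : Fin 6 → Fin 6 → Fin 6 → ℝ := antisym3 epsbarBase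

/-- Kronecker delta `δ_{ij}`. -/
def kron (i j : Fin 6) : ℝ := if i = j then 1 else 0

open ExteriorAlgebra

variable {M : Type*} [AddCommGroup M] [Module ℝ M]


/-- Integer version of `epsBase`. -/
def epsBaseZ : Fin 6 → Fin 6 → Fin 6 → ℤ := fun i j k =>
  if i = 0 ∧ j = 2 ∧ k = 4 then 1
  else if i = 0 ∧ j = 3 ∧ k = 5 then -1
  else if i = 1 ∧ j = 3 ∧ k = 4 then -1
  else if i = 1 ∧ j = 2 ∧ k = 5 then -1 else 0

/-- Integer version of `kap`. -/
def kapZ : Fin 6 → Fin 6 → ℤ := fun i j =>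
  if (i = 0 ∧ j = 1) ∨ (i = 2 ∧ j = 3) ∨ (i = 4 ∧ j = 5) then 1
  else if (i = 1 ∧ j = 0) ∨ (i = 3 ∧ j = 2) ∨ (i = 5 ∧ j = 4) then -1 else 0

/-- Integer version of `eps`. -/
def epsZ : Fin 6 → Fin 6 → Fin 6 → ℤ := fun i j k =>
  epsBaseZ i j k - epsBaseZ j i k - epsBaseZ k j i - epsBaseZ i k j
    + epsBaseZ j k i + epsBaseZ k i j

lemma antisym3_eq (b : Fin 6 → Fin 6 → Fin 6 → ℝ) (i j k : Fin 6) :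
    antisym3 b i j k = b i j k - b j i k - b k j i - b i k j + b j k i + b k i j := by
  rw [antisym3, show (Finset.univ : Finset (Equiv.Perm (Fin 3))) =
    {1, Equiv.swap 0 1, Equiv.swap 0 2, Equiv.swap 1 2, finRotate 3, (finRotate 3)^2} from
      by decide]
  rw [Finset.sum_insert (by decide), Finset.sum_insert (by decide),
    Finset.sum_insert (by decide), Finset.sum_insert (by decide),
    Finset.sum_insert (by decide), Finset.sum_singleton]
  rw [show Equiv.Perm.sign (1 : Equiv.Perm (Fin 3)) = 1 from by decide,
    show Equiv.Perm.sign (Equiv.swap (0:Fin 3) 1) = -1 from by decide,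
    show Equiv.Perm.sign (Equiv.swap (0:Fin 3) 2) = -1 from by decide,
    show Equiv.Perm.sign (Equiv.swap (1:Fin 3) 2) = -1 from by decide,
    show Equiv.Perm.sign (finRotate 3) = 1 from by decide,
    show Equiv.Perm.sign ((finRotate 3)^2) = 1 from by decide]
  norm_num [show ∀ x : Fin 3, (Equiv.swap (0:Fin 3) 1) x = ![1,0,2] x from by decide,
    show ∀ x : Fin 3, (Equiv.swap (0:Fin 3) 2) x = ![2,1,0] x from by decide,
    show ∀ x : Fin 3, (Equiv.swap (1:Fin 3) 2) x = ![0,2,1] x from by decide,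
    show ∀ x : Fin 3, (finRotate 3) x = ![1,2,0] x from by decide,
    show ∀ x : Fin 3, ((finRotate 3)^2) x = ![2,0,1] x from by decide]
  simp only [show (![1,0,2] : Fin 3 → Fin 3) 2 = 2 from rfl, show (![2,1,0] : Fin 3 → Fin 3) 2 = 0 from rfl,
    show (![0,2,1] : Fin 3 → Fin 3) 2 = 1 from rfl, show (![1,2,0] : Fin 3 → Fin 3) 2 = 0 from rfl,
    show (![2,0,1] : Fin 3 → Fin 3) 2 = 1 from rfl, show ![i, j, k] 0 = i from rfl,
    show ![i, j, k] 1 = j from rfl, show ![i, j, k] 2 = k from rfl]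
  ring

lemma eps_cast (i j k : Fin 6) : eps i j k = ((epsZ i j k : ℤ) : ℝ) := by
  have hb : ∀ a b c : Fin 6, epsBase a b c = ((epsBaseZ a b c : ℤ) : ℝ) := by
    intro a b c
    unfold epsBase epsBaseZ
    split_ifs <;> norm_num
  rw [eps, antisym3_eq, epsZ]
  push_cast
  rw [hb, hb, hb, hb, hb, hb]

lemma kap_cast (i j : Fin 6) : kap i j = ((kapZ i j : ℤ) : ℝ) := by
  unfold kap kapZ
  split_ifs <;> norm_num

set_option maxHeartbeats 1000000 in
lemma scalar1 : ∀ i j p : Fin 6, ∑ k, (epsZ i k p * kapZ k j + kapZ i k * epsZ k j p) = 0 := by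
  decide

set_option maxHeartbeats 1000000 in
lemma scalar2 : ∀ i j p : Fin 6, ∑ k, epsZ i k p * kapZ k j = ∑ k, epsZ i j k * kapZ k p := by
  decide

/-- For any vector of 1-forms `τ = (τ₁,…,τ₆)` and any 1-form `μ`:
`[τ]₂ ∧ [μ]₁ - [μ]₁ ∧ [τ]₂ = 0` and `[τ]₂ ∧ [μ]₁ + [[μ]₁ ∧ τ]₂ = 0`,
where `[μ]₁` has entries `κ_{ij} μ`, `[τ]₂` has entries `ε_{ijp} τ_p`,
matrix products use the wedge product entrywise, and `[μ]₁ ∧ τ` is the vector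
of 2-forms with `i`-th entry `κ_{ij} μ ∧ τ_j`. -/
theorem bracket2_bracket1_identities (τ : Fin 6 → M) (μ : M) :
    (∀ i j,
      (∑ k, (∑ p, eps i k p • ExteriorAlgebra.ι ℝ (τ p)) * (kap k j • ExteriorAlgebra.ι ℝ μ))
        - (∑ k, (kap i k • ExteriorAlgebra.ι ℝ μ) * (∑ p, eps k j p • ExteriorAlgebra.ι ℝ (τ p)))
        = 0) ∧
    (∀ i j,
      (∑ k, (∑ p, eps i k p • ExteriorAlgebra.ι ℝ (τ p)) * (kap k j • ExteriorAlgebra.ι ℝ μ))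
        + (∑ p, eps i j p •
            (∑ q, kap p q • (ExteriorAlgebra.ι ℝ μ * ExteriorAlgebra.ι ℝ (τ q))))
        = 0) := by
  classical
  set T : Fin 6 → ExteriorAlgebra ℝ M := fun p => ExteriorAlgebra.ι ℝ (τ p) with hT
  have hsw : ∀ p, ExteriorAlgebra.ι ℝ μ * T p = -(T p * ExteriorAlgebra.ι ℝ μ) := fun p =>
    eq_neg_of_add_eq_zero_left (by rw [add_comm]; exact ExteriorAlgebra.ι_add_mul_swap _ _)
  constructor
  · intro i j
    have h1 : ∀ k, (∑ p, eps i k p • T p) * (kap k j • ExteriorAlgebra.ι ℝ μ)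
        = ∑ p, (eps i k p * kap k j) • (T p * ExteriorAlgebra.ι ℝ μ) := by
      intro k
      rw [Finset.sum_mul]
      exact Finset.sum_congr rfl fun p _ => by
        rw [smul_mul_assoc, mul_smul_comm, smul_smul]
    have h2 : ∀ k, (kap i k • ExteriorAlgebra.ι ℝ μ) * (∑ p, eps k j p • T p)
        = ∑ p, (-(kap i k * eps k j p)) • (T p * ExteriorAlgebra.ι ℝ μ) := by
      intro k
      rw [Finset.mul_sum]
      exact Finset.sum_congr rfl fun p _ => by
        rw [smul_mul_assoc, mul_smul_comm, smul_smul, hsw, smul_neg, ← neg_smul]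
    simp only [show ∀ p, ExteriorAlgebra.ι ℝ (τ p) = T p from fun p => rfl]
    simp only [h1, h2, ← Finset.sum_sub_distrib, ← sub_smul]
    rw [Finset.sum_comm]
    refine Finset.sum_eq_zero fun p _ => ?_
    rw [← Finset.sum_smul]
    convert zero_smul ℝ (T p * ExteriorAlgebra.ι ℝ μ) using 2
    have := scalar1 i j p
    have : ((∑ k, (epsZ i k p * kapZ k j + kapZ i k * epsZ k j p) : ℤ) : ℝ) = 0 := by
      rw [this]; norm_num
    push_cast at this
    rw [← this]
    exact Finset.sum_congr rfl fun k _ => by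
      rw [eps_cast, eps_cast, kap_cast, kap_cast]; push_cast; ring
  · intro i j
    have h1 : ∀ k, (∑ p, eps i k p • T p) * (kap k j • ExteriorAlgebra.ι ℝ μ)
        = ∑ p, (eps i k p * kap k j) • (T p * ExteriorAlgebra.ι ℝ μ) := by
      intro k
      rw [Finset.sum_mul]
      exact Finset.sum_congr rfl fun p _ => by
        rw [smul_mul_assoc, mul_smul_comm, smul_smul]
    have h2 : ∀ p, eps i j p •
          (∑ q, kap p q • (ExteriorAlgebra.ι ℝ μ * T q))
        = ∑ q, (-(eps i j p * kap p q)) • (T q * ExteriorAlgebra.ι ℝ μ) := by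
      intro p
      rw [Finset.smul_sum]
      exact Finset.sum_congr rfl fun q _ => by
        rw [hsw, smul_neg, smul_neg, smul_smul, ← neg_smul]
    simp only [show ∀ p, ExteriorAlgebra.ι ℝ (τ p) = T p from fun p => rfl]
    simp only [h1, h2, ← Finset.sum_add_distrib, ← add_smul]
    rw [Finset.sum_comm]
    refine Finset.sum_eq_zero fun p _ => ?_
    rw [← Finset.sum_smul]
    convert zero_smul ℝ (T p * ExteriorAlgebra.ι ℝ μ) using 2
    have hs := scalar2 i j p
    have hcast : ((∑ k, epsZ i k p * kapZ k j : ℤ) : ℝ)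
        = ((∑ k, epsZ i j k * kapZ k p : ℤ) : ℝ) := by rw [hs]
    push_cast at hcast
    have : ∑ k, (eps i k p * kap k j + -(eps i j k * kap k p)) = 0 := by
      rw [Finset.sum_add_distrib]
      have e1 : ∑ k, eps i k p * kap k j = ∑ k, ((epsZ i k p : ℝ) * (kapZ k j : ℝ)) :=
        Finset.sum_congr rfl fun k _ => by rw [eps_cast, kap_cast]
      have e2 : ∑ k, eps i j k * kap k p = ∑ k, ((epsZ i j k : ℝ) * (kapZ k p : ℝ)) :=
        Finset.sum_congr rfl fun k _ => by rw [eps_cast, kap_cast]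
      rw [e1, Finset.sum_neg_distrib, e2, hcast]
      ring
    rw [← this]


end
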